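/- arXiv:1802.08773 — 2 statements merged into one kernel-verified Lean document; each statement's English description precedes it below -/
import Mathlib

section
/- If k_1 and k_2 are positive semidefinite kernels on a set X, then their pointwise product k(x,y) = k_1(x,y)·k_2(x,y) is a positive semidefinite kernel on X. -/
/-- A kernel is positive semidefinite if it is symmetric and all finite Gram
quadratic forms are nonnegative. -/
def IsPSDKernel {X : Type*} (k : X → X → ℝ) : Prop :=
  (∀ x y, k x y = k y x) ∧
  ∀ (m : ℕ) (x : Fin m → X) (c : Fin m → ℝ),
    0 ≤ ∑ i, ∑ j, c i * c j * k (x i) (x j)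

/-- The pointwise product of two positive semidefinite kernels is a positive
semidefinite kernel. -/
theorem isPSDKernel_mul {X : Type*} (k₁ k₂ : X → X → ℝ)
    (h₁ : IsPSDKernel k₁) (h₂ : IsPSDKernel k₂) :
    IsPSDKernel (fun x y => k₁ x y * k₂ x y) := by
  obtain ⟨s₁, q₁⟩ := h₁
  obtain ⟨s₂, q₂⟩ := h₂
  refine ⟨fun x y => by simp [s₁ x y, s₂ x y], fun m x c => ?_⟩
  -- the Gram matrix of k₂
  set B : Matrix (Fin m) (Fin m) ℝ := Matrix.of (fun i j => k₂ (x i) (x j)) with hB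
  have hBpsd : B.PosSemidef := by
    refine Matrix.PosSemidef.of_dotProduct_mulVec_nonneg ?_ ?_
    · ext i j
      simp [hB, Matrix.conjTranspose, s₂ (x j) (x i)]
    · intro v
      have := q₂ m x v
      simp only [dotProduct, Matrix.mulVec, dotProduct, star_trivial]
      calc (0:ℝ) ≤ ∑ i, ∑ j, v i * v j * k₂ (x i) (x j) := this
        _ = ∑ i, v i * ∑ j, B i j * v j := by
            simp only [Finset.mul_sum]
            refine Finset.sum_congr rfl fun i _ => Finset.sum_congr rfl fun j _ => ?_
            simp [hB]; ring
  -- square root S with S * S = B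
  open scoped MatrixOrder in
  set S := CFC.sqrt B with hS
  open scoped MatrixOrder in
  have hSS : S * S = B := CFC.sqrt_mul_sqrt_self B (Matrix.nonneg_iff_posSemidef.mpr hBpsd)
  have hSsymm : ∀ i j, S i j = S j i := by
    intro i j
    open scoped MatrixOrder in
    have h := (Matrix.nonneg_iff_posSemidef.mp (CFC.sqrt_nonneg B)).isHermitian
    have := congrFun (congrFun h j) i
    rw [hS]; simpa [Matrix.conjTranspose] using this
  have hBentry : ∀ i j, B i j = ∑ l, S i l * S j l := by
    intro i j
    have := congrFun (congrFun hSS i) j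
    rw [← this]
    simp [Matrix.mul_apply]
    exact Finset.sum_congr rfl fun l _ => by rw [hSsymm l j]
  calc (0:ℝ) ≤ ∑ l, ∑ i, ∑ j, (c i * S i l) * (c j * S j l) * k₁ (x i) (x j) := by
        exact Finset.sum_nonneg fun l _ => q₁ m x (fun i => c i * S i l)
    _ = ∑ i, ∑ j, c i * c j * (k₁ (x i) (x j) * k₂ (x i) (x j)) := by
        rw [Finset.sum_comm]
        refine Finset.sum_congr rfl fun i _ => ?_
        rw [Finset.sum_comm]
        refine Finset.sum_congr rfl fun j _ => ?_
        have : k₂ (x i) (x j) = ∑ l, S i l * S j l := hBentry i j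
        rw [this, Finset.mul_sum, Finset.mul_sum]
        exact Finset.sum_congr rfl fun l _ => by ring
end

section
/- Let p and q be probability measures on ℝ with cumulative distribution functions F_p and F_q. Then the first Wasserstein distance satisfies W(p,q) = ∫_ℝ |F_p(t) − F_q(t)| dt. -/
open MeasureTheory

/-- The first Wasserstein distance between measures on `ℝ`: the infimum over
couplings `γ` of `p` and `q` of `E_{(x,y) ∼ γ} |x - y|`. -/
noncomputable def wasserstein1 (p q : Measure ℝ) : ℝ :=
  ⨅ γ : {γ : Measure (ℝ × ℝ) // γ.map Prod.fst = p ∧ γ.map Prod.snd = q},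
    ∫ z, |z.1 - z.2| ∂(γ : Measure (ℝ × ℝ))

open Set ENNReal ProbabilityTheory Filter Topology

namespace W1Aux

/-- The layer-cake kernel: indicator of `t ∈ [min x y, max x y)`. -/
noncomputable def k (x y t : ℝ) : ℝ≥0∞ := if min x y ≤ t ∧ t < max x y then 1 else 0

lemma k_eq_indicator (x y : ℝ) :
    (fun t => k x y t) = Set.indicator (Set.Ico (min x y) (max x y)) (fun _ => (1 : ℝ≥0∞)) := by
  funext t; simp [k, Set.indicator_apply, Set.mem_Ico]

lemma lintegral_k (x y : ℝ) : ∫⁻ t, k x y t = ENNReal.ofReal |x - y| := by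
  rw [k_eq_indicator, lintegral_indicator measurableSet_Ico]
  simp [Real.volume_Ico, max_sub_min_eq_abs, abs_sub_comm]

lemma measurable_k : Measurable (fun w : (ℝ × ℝ) × ℝ => k w.1.1 w.1.2 w.2) := by
  unfold k
  refine Measurable.ite ?_ measurable_const measurable_const
  exact (measurableSet_le (measurable_fst.fst.min measurable_fst.snd) measurable_snd).inter
    (measurableSet_lt measurable_snd (measurable_fst.fst.max measurable_fst.snd))

lemma volume_between {a b : ℝ} {s : Set ℝ} (h1 : Set.Ioo a b ⊆ s) (h2 : s ⊆ Set.Ioc a b) :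
    volume s = ENNReal.ofReal (b - a) :=
  le_antisymm (by rw [← Real.volume_Ioc]; exact measure_mono h2)
    (by rw [← Real.volume_Ioo]; exact measure_mono h1)

/-- Lower bound: for any coupling, the transport cost dominates the cdf-difference integral. -/
lemma le_lintegral_coupling {p q : Measure ℝ} [IsProbabilityMeasure p] [IsProbabilityMeasure q]
    (γ : Measure (ℝ × ℝ)) [IsProbabilityMeasure γ]
    (h1 : γ.map Prod.fst = p) (h2 : γ.map Prod.snd = q) :
    ∫⁻ t, ENNReal.ofReal |cdf p t - cdf q t| ≤ ∫⁻ z, ENNReal.ofReal |z.1 - z.2| ∂γ := by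
  have hswap : ∫⁻ z, ENNReal.ofReal |z.1 - z.2| ∂γ = ∫⁻ t, ∫⁻ z, k z.1 z.2 t ∂γ := by
    calc ∫⁻ z, ENNReal.ofReal |z.1 - z.2| ∂γ = ∫⁻ z, ∫⁻ t, k z.1 z.2 t ∂volume ∂γ := by
          simp_rw [lintegral_k]
      _ = ∫⁻ t, ∫⁻ z, k z.1 z.2 t ∂γ := lintegral_lintegral_swap measurable_k.aemeasurable
  rw [hswap]
  refine lintegral_mono fun t => ?_
  -- inner integral is the measure of a symmetric difference
  have hk : (fun z : ℝ × ℝ => k z.1 z.2 t) =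
      Set.indicator {z : ℝ × ℝ | min z.1 z.2 ≤ t ∧ t < max z.1 z.2} (fun _ => (1 : ℝ≥0∞)) := by
    funext z; simp [k, Set.indicator_apply, Set.mem_setOf_eq]
  have hms : MeasurableSet {z : ℝ × ℝ | min z.1 z.2 ≤ t ∧ t < max z.1 z.2} :=
    (measurableSet_le (measurable_fst.min measurable_snd) measurable_const).inter
      (measurableSet_lt measurable_const (measurable_fst.max measurable_snd))
  rw [hk, lintegral_indicator hms]
  simp only [lintegral_const, MeasurableSet.univ, Measure.restrict_apply, Set.univ_inter, one_mul]
  set A : Set (ℝ × ℝ) := Prod.fst ⁻¹' Set.Iic t with hA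
  set B : Set (ℝ × ℝ) := Prod.snd ⁻¹' Set.Iic t with hB
  have hset : {z : ℝ × ℝ | min z.1 z.2 ≤ t ∧ t < max z.1 z.2} = (A \ B) ∪ (B \ A) := by
    ext z
    simp only [Set.mem_setOf_eq, Set.mem_union, Set.mem_diff, hA, hB,
      Set.mem_preimage, Set.mem_Iic, ← not_le, min_le_iff, sup_le_iff]
    tauto
  have hγA : γ A = p (Set.Iic t) := by
    rw [← h1, Measure.map_apply measurable_fst measurableSet_Iic]
  have hγB : γ B = q (Set.Iic t) := by
    rw [← h2, Measure.map_apply measurable_snd measurableSet_Iic]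
  have hcp : ENNReal.ofReal (cdf p t) = γ A := by rw [hγA, ofReal_cdf]
  have hcq : ENNReal.ofReal (cdf q t) = γ B := by rw [hγB, ofReal_cdf]
  rw [hset]
  rcases le_total (cdf q t) (cdf p t) with h | h
  · have habs : |cdf p t - cdf q t| = cdf p t - cdf q t := abs_of_nonneg (by linarith)
    calc ENNReal.ofReal |cdf p t - cdf q t|
        = ENNReal.ofReal (cdf p t) - ENNReal.ofReal (cdf q t) := by
          rw [habs, ENNReal.ofReal_sub _ (cdf_nonneg q t)]
      _ = γ A - γ B := by rw [hcp, hcq]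
      _ ≤ γ (A \ B) := le_measure_diff
      _ ≤ γ ((A \ B) ∪ (B \ A)) := measure_mono Set.subset_union_left
  · have habs : |cdf p t - cdf q t| = cdf q t - cdf p t := by
      rw [abs_sub_comm]; exact abs_of_nonneg (by linarith)
    calc ENNReal.ofReal |cdf p t - cdf q t|
        = ENNReal.ofReal (cdf q t) - ENNReal.ofReal (cdf p t) := by
          rw [habs, ENNReal.ofReal_sub _ (cdf_nonneg p t)]
      _ = γ B - γ A := by rw [hcp, hcq]
      _ ≤ γ (B \ A) := le_measure_diff
      _ ≤ γ ((A \ B) ∪ (B \ A)) := measure_mono Set.subset_union_right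

/-- The quantile function of a measure. -/
noncomputable def Q (p : Measure ℝ) (u : ℝ) : ℝ := sInf {x | u ≤ cdf p x}

variable {p : Measure ℝ} [IsProbabilityMeasure p]

lemma Q_nonempty {u : ℝ} (hu : u < 1) : {x | u ≤ cdf p x}.Nonempty := by
  obtain ⟨x, hx⟩ := ((tendsto_cdf_atTop p).eventually (eventually_gt_nhds hu)).exists
  exact ⟨x, hx.le⟩

lemma Q_bddBelow {u : ℝ} (hu : 0 < u) : BddBelow {x | u ≤ cdf p x} := by
  obtain ⟨x0, hx0⟩ := ((tendsto_cdf_atBot p).eventually (eventually_lt_nhds hu)).exists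
  refine ⟨x0, fun y hy => ?_⟩
  by_contra hlt
  push_neg at hlt
  exact absurd (le_trans hy (monotone_cdf p hlt.le)) (not_le.2 hx0)

lemma Q_le_iff {u : ℝ} (hu : u ∈ Set.Ioo (0 : ℝ) 1) (t : ℝ) :
    Q p u ≤ t ↔ u ≤ cdf p t := by
  constructor
  · intro h
    have htend : Tendsto (cdf p) (𝓝[>] t) (𝓝 (cdf p t)) :=
      ((cdf p).right_continuous t).tendsto.mono_left (nhdsWithin_mono t Set.Ioi_subset_Ici_self)
    refine ge_of_tendsto htend ?_
    filter_upwards [self_mem_nhdsWithin] with s hs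
    have hlt : sInf {x | u ≤ cdf p x} < s := lt_of_le_of_lt h hs
    obtain ⟨x, hx, hxs⟩ := exists_lt_of_csInf_lt (Q_nonempty hu.2) hlt
    exact le_trans hx (monotone_cdf p hxs.le)
  · intro h
    exact csInf_le (Q_bddBelow hu.1) h

lemma Q_monotoneOn : MonotoneOn (Q p) (Set.Ioo (0 : ℝ) 1) := by
  intro u hu v hv huv
  exact csInf_le_csInf (Q_bddBelow hu.1) (Q_nonempty hv.2)
    (fun x hx => le_trans huv hx)


section Coupling

/-- Uniform measure on `(0,1)`. -/
noncomputable def mu01 : Measure ℝ := volume.restrict (Set.Ioo (0 : ℝ) 1)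

instance : IsProbabilityMeasure mu01 :=
  ⟨by simp [mu01, Real.volume_Ioo]⟩

lemma aemeasurable_Q (p : Measure ℝ) [IsProbabilityMeasure p] : AEMeasurable (Q p) mu01 :=
  aemeasurable_restrict_of_monotoneOn measurableSet_Ioo Q_monotoneOn

lemma mu01_map_eq (m : Measure ℝ) [IsProbabilityMeasure m] {f : ℝ → ℝ} (hf : Measurable f)
    (hG : ∀ᵐ u ∂mu01, ∀ t, f u ≤ t ↔ u ≤ cdf m t) : mu01.map f = m := by
  haveI : IsProbabilityMeasure (mu01.map f) := Measure.isProbabilityMeasure_map hf.aemeasurable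
  refine Measure.ext_of_Iic _ _ (fun t => ?_)
  rw [Measure.map_apply hf measurableSet_Iic, ← ofReal_cdf]
  have hae : f ⁻¹' Set.Iic t =ᵐ[mu01] Set.Iic (cdf m t) := by
    rw [Filter.eventuallyEq_set]
    filter_upwards [hG] with u hu
    simpa [Set.mem_preimage, Set.mem_Iic] using hu t
  rw [measure_congr hae]
  have h0 := cdf_nonneg m t
  have h1 := cdf_le_one m t
  rw [mu01, Measure.restrict_apply measurableSet_Iic,
    show ENNReal.ofReal (cdf m t) = ENNReal.ofReal (cdf m t - 0) by rw [sub_zero]]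
  refine volume_between (fun u hu => ?_) (fun u hu => ?_)
  · exact ⟨hu.2.le, hu.1, lt_of_lt_of_le hu.2 h1⟩
  · exact ⟨hu.2.1, hu.1⟩

lemma exists_good_coupling (p q : Measure ℝ) [IsProbabilityMeasure p] [IsProbabilityMeasure q] :
    ∃ γ : Measure (ℝ × ℝ), IsProbabilityMeasure γ ∧ γ.map Prod.fst = p ∧ γ.map Prod.snd = q ∧
      ∫⁻ z, ENNReal.ofReal |z.1 - z.2| ∂γ = ∫⁻ t, ENNReal.ofReal |cdf p t - cdf q t| := by
  obtain ⟨Qp, hQpm, hQpe⟩ : ∃ f : ℝ → ℝ, Measurable f ∧ Q p =ᵐ[mu01] f :=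
    ⟨_, (aemeasurable_Q p).measurable_mk, (aemeasurable_Q p).ae_eq_mk⟩
  obtain ⟨Qq, hQqm, hQqe⟩ : ∃ f : ℝ → ℝ, Measurable f ∧ Q q =ᵐ[mu01] f :=
    ⟨_, (aemeasurable_Q q).measurable_mk, (aemeasurable_Q q).ae_eq_mk⟩
  have hmem : ∀ᵐ u ∂mu01, u ∈ Set.Ioo (0 : ℝ) 1 := ae_restrict_mem measurableSet_Ioo
  have hGp : ∀ᵐ u ∂mu01, ∀ t, Qp u ≤ t ↔ u ≤ cdf p t := by
    filter_upwards [hQpe, hmem] with u h1 h2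
    intro t; rw [← h1]; exact Q_le_iff h2 t
  have hGq : ∀ᵐ u ∂mu01, ∀ t, Qq u ≤ t ↔ u ≤ cdf q t := by
    filter_upwards [hQqe, hmem] with u h1 h2
    intro t; rw [← h1]; exact Q_le_iff h2 t
  have hg : Measurable fun u => (Qp u, Qq u) := hQpm.prodMk hQqm
  refine ⟨mu01.map (fun u => (Qp u, Qq u)), Measure.isProbabilityMeasure_map hg.aemeasurable, ?_, ?_, ?_⟩
  · rw [Measure.map_map measurable_fst hg]
    exact mu01_map_eq p hQpm hGp
  · rw [Measure.map_map measurable_snd hg]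
    exact mu01_map_eq q hQqm hGq
  · rw [lintegral_map (f := fun z : ℝ × ℝ => ENNReal.ofReal |z.1 - z.2|)
      ((measurable_fst.sub measurable_snd).abs.ennreal_ofReal) hg]
    have hmeasU : Measurable fun w : ℝ × ℝ => k (Qp w.1) (Qq w.1) w.2 :=
      measurable_k.comp (((hQpm.comp measurable_fst).prodMk
        (hQqm.comp measurable_fst)).prodMk measurable_snd)
    calc ∫⁻ u, ENNReal.ofReal |Qp u - Qq u| ∂mu01
        = ∫⁻ u, ∫⁻ t, k (Qp u) (Qq u) t ∂volume ∂mu01 := by simp_rw [lintegral_k]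
      _ = ∫⁻ t, ∫⁻ u, k (Qp u) (Qq u) t ∂mu01 := lintegral_lintegral_swap hmeasU.aemeasurable
      _ = ∫⁻ t, ENNReal.ofReal |cdf p t - cdf q t| := by
          refine lintegral_congr fun t => ?_
          set a := cdf p t with ha
          set b := cdf q t with hb
          have hk : (fun u : ℝ => k (Qp u) (Qq u) t) =
              Set.indicator {u : ℝ | min (Qp u) (Qq u) ≤ t ∧ t < max (Qp u) (Qq u)}
                (fun _ => (1 : ℝ≥0∞)) := by
            funext u; simp [k, Set.indicator_apply, Set.mem_setOf_eq]
          have hms : MeasurableSet {u : ℝ | min (Qp u) (Qq u) ≤ t ∧ t < max (Qp u) (Qq u)} :=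
            (measurableSet_le (hQpm.min hQqm) measurable_const).inter
              (measurableSet_lt measurable_const (hQpm.max hQqm))
          rw [hk, lintegral_indicator hms]
          simp only [lintegral_const, MeasurableSet.univ, Measure.restrict_apply,
            Set.univ_inter, one_mul]
          have hae : {u : ℝ | min (Qp u) (Qq u) ≤ t ∧ t < max (Qp u) (Qq u)} =ᵐ[mu01]
              Set.Ioc (min a b) (max a b) := by
            rw [Filter.eventuallyEq_set]
            filter_upwards [hGp, hGq] with u h1 h2
            have e1 := h1 t
            have e2 := h2 t
            simp only [Set.mem_setOf_eq, Set.mem_Ioc, min_le_iff, ← not_le, sup_le_iff,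
              le_min_iff, le_max_iff, e1, e2]
            tauto
          rw [measure_congr hae, mu01, Measure.restrict_apply measurableSet_Ioc,
            show ENNReal.ofReal |a - b| = ENNReal.ofReal (max a b - min a b) by
              rw [max_sub_min_eq_abs, abs_sub_comm]]
          have h0 : 0 ≤ min a b := le_min (cdf_nonneg p t) (cdf_nonneg q t)
          have h1 : max a b ≤ 1 := max_le (cdf_le_one p t) (cdf_le_one q t)
          refine volume_between (fun u hu => ?_) (fun u hu => ?_)
          · exact ⟨⟨hu.1, hu.2.le⟩, lt_of_le_of_lt h0 hu.1, lt_of_lt_of_le hu.2 h1⟩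
          · exact ⟨hu.1.1, hu.1.2⟩

end Coupling

end W1Aux

open W1Aux

/-- One-dimensional formula for the first Wasserstein distance: it equals the
integral of the absolute difference of the cumulative distribution functions. -/
theorem wasserstein1_eq_integral_cdf_diff (p q : Measure ℝ)
    [IsProbabilityMeasure p] [IsProbabilityMeasure q]
    (hp : Integrable (fun x => |x|) p) (hq : Integrable (fun x => |x|) q) :
    wasserstein1 p q =
      ∫ t : ℝ, |(p (Set.Iic t)).toReal - (q (Set.Iic t)).toReal| := by
  obtain ⟨γ₀, hγ₀prob, hm1, hm2, hcost⟩ := exists_good_coupling p q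
  haveI := hγ₀prob
  set L : ℝ≥0∞ := ∫⁻ t, ENNReal.ofReal |cdf p t - cdf q t| with hLdef
  -- basic facts about every coupling
  have key : ∀ γ : Measure (ℝ × ℝ), γ.map Prod.fst = p → γ.map Prod.snd = q →
      IsProbabilityMeasure γ ∧ Integrable (fun z : ℝ × ℝ => |z.1 - z.2|) γ ∧
      ∫ z, |z.1 - z.2| ∂γ = (∫⁻ z, ENNReal.ofReal |z.1 - z.2| ∂γ).toReal := by
    intro γ h1 h2
    have hprob : IsProbabilityMeasure γ := by
      constructor
      have : (γ.map Prod.fst) Set.univ = γ Set.univ := by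
        rw [Measure.map_apply measurable_fst MeasurableSet.univ, Set.preimage_univ]
      rw [← this, h1, measure_univ]
    haveI := hprob
    have meas : AEStronglyMeasurable (fun z : ℝ × ℝ => |z.1 - z.2|) γ :=
      (continuous_fst.sub continuous_snd).abs.aestronglyMeasurable
    have i1 : Integrable (fun z : ℝ × ℝ => |z.1|) γ := by
      have h : Integrable (fun x => |x|) (γ.map Prod.fst) := h1 ▸ hp
      exact (integrable_map_measure continuous_abs.aestronglyMeasurable
        measurable_fst.aemeasurable).1 h
    have i2 : Integrable (fun z : ℝ × ℝ => |z.2|) γ := by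
      have h : Integrable (fun x => |x|) (γ.map Prod.snd) := h2 ▸ hq
      exact (integrable_map_measure continuous_abs.aestronglyMeasurable
        measurable_snd.aemeasurable).1 h
    have hint : Integrable (fun z : ℝ × ℝ => |z.1 - z.2|) γ := by
      refine (i1.add i2).mono' meas (ae_of_all _ fun z => ?_)
      rw [Real.norm_eq_abs, abs_abs]
      exact abs_sub _ _
    exact ⟨hprob, hint,
      integral_eq_lintegral_of_nonneg_ae (ae_of_all _ fun z => abs_nonneg _) meas⟩
  have hLfin : L ≠ ∞ := by
    rw [← hcost]
    exact ((key γ₀ hm1 hm2).2.1.lintegral_lt_top).ne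
  -- rewrite the right-hand side
  have hmeasR : Measurable fun t : ℝ => |cdf p t - cdf q t| :=
    ((monotone_cdf p).measurable.sub (monotone_cdf q).measurable).abs
  have hRHS : ∫ t : ℝ, |(p (Set.Iic t)).toReal - (q (Set.Iic t)).toReal| = L.toReal := by
    simp_rw [← measureReal_def, ← cdf_eq_real]
    rw [integral_eq_lintegral_of_nonneg_ae (ae_of_all _ fun t => abs_nonneg _)
      hmeasR.aestronglyMeasurable]
  rw [hRHS]
  haveI : Nonempty {γ : Measure (ℝ × ℝ) // γ.map Prod.fst = p ∧ γ.map Prod.snd = q} :=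
    ⟨⟨γ₀, hm1, hm2⟩⟩
  refine le_antisymm ?_ (le_ciInf fun γs => ?_)
  · have hbdd : BddBelow (Set.range fun γ : {γ : Measure (ℝ × ℝ) //
        γ.map Prod.fst = p ∧ γ.map Prod.snd = q} =>
        ∫ z, |z.1 - z.2| ∂(γ : Measure (ℝ × ℝ))) := by
      refine ⟨0, ?_⟩
      rintro x ⟨γ, rfl⟩
      exact integral_nonneg fun z => abs_nonneg _
    refine le_trans (ciInf_le hbdd ⟨γ₀, hm1, hm2⟩) ?_
    rw [(key γ₀ hm1 hm2).2.2, hcost]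
  · obtain ⟨γ, h1, h2⟩ := γs
    haveI := (key γ h1 h2).1
    rw [(key γ h1 h2).2.2]
    exact ENNReal.toReal_mono (key γ h1 h2).2.1.lintegral_lt_top.ne
      (le_lintegral_coupling γ h1 h2)
end
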